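/- (Role delegation type I, graph level.) Let P1 and P2 be disjoint sets of vertices with c1 ∈ P1 and c2 ∈ P2, and let S = S(P1, P2, c1, c2) be the binary star graph. Let G' = S − (P2 \ {c2}) be obtained by deleting all vertices of P2 other than c2, and let v ∈ P1 \ {c1}. Then τ_v(τ_{c2}(τ_v(G')) − c2) is the star graph on P1 with center v. -/

import Mathlib

open SimpleGraph

universe u

/-- Local complementation of `G` at vertex `i`: adjacency is toggled exactly among
pairs of neighbors of `i`. -/
def localComp {V : Type u} (G : SimpleGraph V) (i : V) : SimpleGraph V where
  Adj a b := a ≠ b ∧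
    ((G.Adj i a ∧ G.Adj i b) ∧ ¬ G.Adj a b ∨ ¬(G.Adj i a ∧ G.Adj i b) ∧ G.Adj a b)
  symm := by
    constructor
    rintro a b ⟨hne, h⟩
    refine ⟨hne.symm, ?_⟩
    rcases h with ⟨⟨ha, hb⟩, hab⟩ | ⟨h1, h2⟩
    · exact Or.inl ⟨⟨hb, ha⟩, fun h => hab h.symm⟩
    · exact Or.inr ⟨fun h => h1 ⟨h.2, h.1⟩, h2.symm⟩
  loopless := ⟨fun a h => h.1 rfl⟩

/-- Vertex deletion `G − i`: remove every edge incident to `i` (the vertex stays,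
isolated). -/
def delVert {V : Type u} (G : SimpleGraph V) (i : V) : SimpleGraph V where
  Adj a b := G.Adj a b ∧ a ≠ i ∧ b ≠ i
  symm := ⟨fun _ _ ⟨h, ha, hb⟩ => ⟨h.symm, hb, ha⟩⟩
  loopless := ⟨fun a h => G.loopless.irrefl a h.1⟩

/-- Deletion of a set `Z` of vertices: remove every edge incident to a vertex of `Z`. -/
def delSet {V : Type u} (G : SimpleGraph V) (Z : Set V) : SimpleGraph V where
  Adj a b := G.Adj a b ∧ a ∉ Z ∧ b ∉ Z
  symm := ⟨fun _ _ ⟨h, ha, hb⟩ => ⟨h.symm, hb, ha⟩⟩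
  loopless := ⟨fun a h => G.loopless.irrefl a h.1⟩

/-- Star graph on the set `W` with center `c`: edges are exactly the pairs `{c, u}`
for `u ∈ W \ {c}`. -/
def starGraph {V : Type u} (W : Set V) (c : V) : SimpleGraph V :=
  SimpleGraph.fromRel (fun a b => a = c ∧ b ∈ W \ {c})

/-- Complete graph on the set `A`: edges are exactly all pairs of distinct elements
of `A`. -/
def completeOn {V : Type u} (A : Set V) : SimpleGraph V :=
  SimpleGraph.fromRel (fun a b => a ∈ A ∧ b ∈ A)

/-- Complete bipartite graph on parts `A` and `B`: edges are exactly the pairs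
`{a, b}` with `a ∈ A` and `b ∈ B`. -/
def completeBipartiteOn {V : Type u} (A B : Set V) : SimpleGraph V :=
  SimpleGraph.fromRel (fun a b => a ∈ A ∧ b ∈ B)

/-- Binary star graph `S(P1, P2, c1, c2)`: edges are exactly the pairs `{c1, u}`
with `u ∈ P2` together with the pairs `{u, c2}` with `u ∈ P1`. -/
def binaryStar {V : Type u} (P1 P2 : Set V) (c1 c2 : V) : SimpleGraph V :=
  SimpleGraph.fromRel (fun a b => (a = c1 ∧ b ∈ P2) ∨ (a ∈ P1 ∧ b = c2))

/-- The graph with the single edge `{c1, c2}`. -/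
def singleEdge {V : Type u} (c1 c2 : V) : SimpleGraph V :=
  SimpleGraph.fromRel (fun a b => a = c1 ∧ b = c2)

theorem localComp_adj {V : Type u} (G : SimpleGraph V) (i a b : V) :
    (localComp G i).Adj a b ↔ a ≠ b ∧
      ((G.Adj i a ∧ G.Adj i b) ∧ ¬ G.Adj a b ∨ ¬(G.Adj i a ∧ G.Adj i b) ∧ G.Adj a b) :=
  Iff.rfl

theorem delVert_adj {V : Type u} (G : SimpleGraph V) (i a b : V) :
    (delVert G i).Adj a b ↔ G.Adj a b ∧ a ≠ i ∧ b ≠ i := Iff.rfl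

/-- Role delegation type I, graph level:
with `G' = S − (P2 \ {c2})` and `v ∈ P1 \ {c1}`, `τ_v(τ_{c2}(τ_v(G')) − c2)` is the
star graph on `P1` with center `v`. -/
theorem stmt_7 {V : Type u} (P1 P2 : Set V) (hdisj : Disjoint P1 P2)
    (c1 c2 : V) (hc1 : c1 ∈ P1) (hc2 : c2 ∈ P2) (v : V) (hv : v ∈ P1 \ {c1}) :
    localComp (delVert (localComp (localComp
        (delSet (binaryStar P1 P2 c1 c2) (P2 \ {c2})) v) c2) c2) v =
      starGraph P1 v := by
  have hd : ∀ x, x ∈ P1 → x ∉ P2 := fun x h1 h2 => hdisj.ne_of_mem h1 h2 rfl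
  have hvP1 : v ∈ P1 := hv.1
  have hvc1 : v ≠ c1 := hv.2
  have hvc2 : v ≠ c2 := fun h => hd v hvP1 (h ▸ hc2)
  have hnc2 : ∀ x, x ∈ P1 → x ≠ c2 := fun x h hx => hd x h (hx ▸ hc2)
  have hG' : ∀ a b, (delSet (binaryStar P1 P2 c1 c2) (P2 \ {c2})).Adj a b ↔
      a ≠ b ∧ ((a ∈ P1 ∧ b = c2) ∨ (b ∈ P1 ∧ a = c2)) := by
    intro a b
    simp only [delSet, binaryStar, fromRel_adj, Set.mem_diff, Set.mem_singleton_iff]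
    constructor
    · rintro ⟨⟨hne, h⟩, ha, hb⟩
      refine ⟨hne, ?_⟩
      rcases h with (⟨rfl, hbP2⟩|⟨haP1,rfl⟩)|(⟨rfl,haP2⟩|⟨hbP1,rfl⟩)
      · have : b = c2 := by by_contra h'; exact hb ⟨hbP2, h'⟩
        exact Or.inl ⟨hc1, this⟩
      · exact Or.inl ⟨haP1, rfl⟩
      · have : a = c2 := by by_contra h'; exact ha ⟨haP2, h'⟩
        exact Or.inr ⟨hc1, this⟩
      · exact Or.inr ⟨hbP1, rfl⟩
    · rintro ⟨hne, (⟨haP1, rfl⟩|⟨hbP1, rfl⟩)⟩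
      · exact ⟨⟨hne, Or.inl (Or.inr ⟨haP1, rfl⟩)⟩, fun h => hd a haP1 h.1, fun h => h.2 rfl⟩
      · exact ⟨⟨hne, Or.inr (Or.inr ⟨hbP1, rfl⟩)⟩, fun h => h.2 rfl, fun h => hd b hbP1 h.1⟩
  have h1 : ∀ a b, (localComp (delSet (binaryStar P1 P2 c1 c2) (P2 \ {c2})) v).Adj a b ↔
      a ≠ b ∧ ((a ∈ P1 ∧ b = c2) ∨ (b ∈ P1 ∧ a = c2)) := by
    intro a b
    rw [localComp_adj]
    simp only [hG']
    constructor
    · rintro ⟨hne, ⟨⟨⟨_, (⟨_,h⟩|⟨_,h⟩)⟩, ⟨_, (⟨_,h'⟩|⟨_,h'⟩)⟩⟩, _⟩ | ⟨_, h⟩⟩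
      · exact absurd (h.trans h'.symm) hne
      · exact absurd h' hvc2
      · exact absurd h hvc2
      · exact absurd h hvc2
      · exact ⟨hne, h.2⟩
    · rintro ⟨hne, h⟩
      refine ⟨hne, Or.inr ⟨?_, hne, h⟩⟩
      rintro ⟨⟨_, (⟨_,hh⟩|⟨_,hh⟩)⟩, ⟨_, (⟨_,hh'⟩|⟨_,hh'⟩)⟩⟩
      · exact hne (hh.trans hh'.symm)
      · exact hvc2 hh'
      · exact hvc2 hh
      · exact hvc2 hh
  have h2 : ∀ a b, (localComp (localComp (delSet (binaryStar P1 P2 c1 c2) (P2 \ {c2})) v) c2).Adj a b ↔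
      a ≠ b ∧ ((a ∈ P1 ∧ b ∈ P1) ∨ (a ∈ P1 ∧ b = c2) ∨ (b ∈ P1 ∧ a = c2)) := by
    intro a b
    rw [localComp_adj]
    simp only [h1]
    have hc2P1 : c2 ∉ P1 := fun h => hnc2 c2 h rfl
    constructor
    · rintro ⟨hne, ⟨⟨⟨hca, (⟨h,_⟩|⟨ha,_⟩)⟩, hcb, (⟨h',_⟩|⟨hb,_⟩)⟩, _⟩ | ⟨_, _, hab⟩⟩
      · exact absurd h hc2P1
      · exact absurd h hc2P1
      · exact absurd h' hc2P1
      · exact ⟨hne, Or.inl ⟨ha, hb⟩⟩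
      · exact ⟨hne, Or.inr hab⟩
    · rintro ⟨hne, h⟩
      rcases h with ⟨ha, hb⟩ | h
      · refine ⟨hne, Or.inl ⟨⟨⟨Ne.symm (hnc2 a ha), Or.inr ⟨ha, trivial⟩⟩,
          Ne.symm (hnc2 b hb), Or.inr ⟨hb, trivial⟩⟩, ?_⟩⟩
        rintro ⟨_, ⟨_,h⟩|⟨_,h⟩⟩
        · exact hnc2 b hb h
        · exact hnc2 a ha h
      · refine ⟨hne, Or.inr ⟨?_, hne, h⟩⟩
        rintro ⟨⟨hca, _⟩, ⟨hcb, _⟩⟩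
        rcases h with ⟨_, rfl⟩|⟨_, rfl⟩
        · exact hcb rfl
        · exact hca rfl
  have h3 : ∀ a b, (delVert (localComp (localComp (delSet (binaryStar P1 P2 c1 c2) (P2 \ {c2})) v) c2) c2).Adj a b ↔
      a ≠ b ∧ a ∈ P1 ∧ b ∈ P1 := by
    intro a b
    rw [delVert_adj]
    simp only [h2]
    constructor
    · rintro ⟨⟨hne, ⟨ha,hb⟩|⟨_,rfl⟩|⟨_,rfl⟩⟩, hac, hbc⟩
      · exact ⟨hne, ha, hb⟩
      · exact absurd rfl hbc
      · exact absurd rfl hac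
    · rintro ⟨hne, ha, hb⟩
      exact ⟨⟨hne, Or.inl ⟨ha, hb⟩⟩, hnc2 a ha, hnc2 b hb⟩
  ext a b
  rw [localComp_adj]
  simp only [h3, _root_.starGraph, fromRel_adj, Set.mem_diff, Set.mem_singleton_iff]
  constructor
  · rintro ⟨hne, ⟨⟨⟨_,_,ha⟩,⟨_,_,hb⟩⟩, hnab⟩ | ⟨hn, _, ha, hb⟩⟩
    · exact absurd ⟨hne, ha, hb⟩ hnab
    · refine ⟨hne, ?_⟩
      by_cases hav : a = v
      · exact Or.inl ⟨hav, hb, fun h => hne (hav.trans h.symm)⟩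
      · by_cases hbv : b = v
        · exact Or.inr ⟨hbv, ha, fun h => hne (h.trans hbv.symm)⟩
        · exact absurd ⟨⟨Ne.symm hav, hvP1, ha⟩, Ne.symm hbv, hvP1, hb⟩ hn
  · rintro ⟨hne, ⟨rfl, hb, _⟩ | ⟨rfl, ha, _⟩⟩
    · exact ⟨hne, Or.inr ⟨fun h => h.1.1 rfl, hne, hvP1, hb⟩⟩
    · exact ⟨hne, Or.inr ⟨fun h => h.2.1 rfl, hne, ha, hvP1⟩⟩
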